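/- arXiv:1603.09173 — 2 statements merged into one kernel-verified Lean document; each statement's English description precedes it below -/
import Mathlib

section
/- Let A be a finite nonempty set, X the simplex in ℝ^A, v : X → ℝ^A, and x* ∈ X. Let G be a symmetric positive-definite matrix, set w = G⁻¹ v(x*), and let V be the G-projection of w onto the tangent cone TC_X(x*). Then V = 0 if and only if x* is a Nash equilibrium of v, i.e., if and only if v(x*)·(x − x*) ≤ 0 for all x ∈ X. -/
open Matrix

noncomputable section

/-- The tangent cone `TC_X(x)` of the simplex at `x`. -/
def tcone {A : Type*} [Fintype A] (x : A → ℝ) : Set (A → ℝ) :=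
  {z | (∑ α, z α) = 0 ∧ ∀ α, x α = 0 → 0 ≤ z α}

/-- The quadratic form `wᵀ G w = ‖w‖_G²` associated to a matrix `G`. -/
def qform {A : Type*} [Fintype A] (G : Matrix A A ℝ) (w : A → ℝ) : ℝ :=
  w ⬝ᵥ G.mulVec w

/-- `V` is the `G`-projection of `w` onto `C`. -/
def IsGProj {A : Type*} [Fintype A] (G : Matrix A A ℝ) (C : Set (A → ℝ))
    (w V : A → ℝ) : Prop :=
  V ∈ C ∧ ∀ z ∈ C, qform G (w - V) ≤ qform G (w - z)

section Aux

variable {A : Type*} [Fintype A] {G : Matrix A A ℝ}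

lemma sym_dot (hs : Gᵀ = G) (a b : A → ℝ) : a ⬝ᵥ G.mulVec b = b ⬝ᵥ G.mulVec a := by
  rw [Matrix.dotProduct_mulVec, ← Matrix.mulVec_transpose, hs, dotProduct_comm]

lemma qform_sub (hs : Gᵀ = G) (a b : A → ℝ) :
    qform G (a - b) = qform G a - 2 * (a ⬝ᵥ G.mulVec b) + qform G b := by
  simp only [qform, Matrix.mulVec_sub, dotProduct_sub, sub_dotProduct]
  rw [sym_dot hs a b]
  ring

lemma tcone_smul {x z : A → ℝ} (hz : z ∈ tcone x) {t : ℝ} (ht : 0 ≤ t) :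
    t • z ∈ tcone x := by
  refine ⟨?_, fun α hα => ?_⟩
  · simp [← Finset.mul_sum, hz.1]
  · exact mul_nonneg ht (hz.2 α hα)

end Aux

/-- Nash stationarity for discontinuous Riemannian dynamics.
With `w = G⁻¹ v(x*)` and `V` the `G`-projection of `w` onto `TC_X(x*)`, one has `V = 0`
iff `x*` is a Nash equilibrium of `v`. -/
theorem stmt_4 {A : Type*} [Fintype A] [DecidableEq A] [Nonempty A]
    (v : (A → ℝ) → (A → ℝ)) (xstar : A → ℝ) (hxstar : xstar ∈ stdSimplex ℝ A)
    (G : Matrix A A ℝ) (hG : G.PosDef)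
    (V : A → ℝ) (hV : IsGProj G (tcone xstar) (G⁻¹.mulVec (v xstar)) V) :
    V = 0 ↔ ∀ x ∈ stdSimplex ℝ A, v xstar ⬝ᵥ (x - xstar) ≤ 0 := by
  obtain ⟨hVC, hVmin⟩ := hV
  set w : A → ℝ := G⁻¹.mulVec (v xstar) with hw
  have hs : Gᵀ = G := by
    have := hG.isHermitian.eq
    rwa [Matrix.conjTranspose_eq_transpose_of_trivial] at this
  have hGdet : IsUnit G.det := isUnit_iff_ne_zero.mpr hG.det_pos.ne'
  have hGw : G.mulVec w = v xstar := by
    rw [hw, Matrix.mulVec_mulVec, Matrix.mul_nonsing_inv _ hGdet, Matrix.one_mulVec]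
  have key : ∀ z : A → ℝ, w ⬝ᵥ G.mulVec z = v xstar ⬝ᵥ z := by
    intro z
    rw [sym_dot hs, hGw, dotProduct_comm]
  -- positivity of qform
  have hq_pos : ∀ z : A → ℝ, z ≠ 0 → 0 < qform G z := by
    intro z hz
    have := hG.dotProduct_mulVec_pos hz
    simpa [qform, star_trivial] using this
  have hq_nonneg : ∀ z : A → ℝ, 0 ≤ qform G z := by
    intro z
    by_cases h : z = 0
    · simp [h, qform]
    · exact (hq_pos z h).le
  -- tcone membership of x - xstar
  have hdiff : ∀ x ∈ stdSimplex ℝ A, x - xstar ∈ tcone xstar := by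
    intro x hx
    refine ⟨?_, fun α hα => ?_⟩
    · simp [Finset.sum_sub_distrib, hx.2, hxstar.2]
    · simp only [Pi.sub_apply, hα, sub_zero]
      exact hx.1 α
  constructor
  · -- V = 0 → Nash
    intro hV0 x hx
    have hz := hdiff x hx
    set z : A → ℝ := x - xstar with hzdef
    rw [← key z]
    by_contra hpos
    push_neg at hpos
    set B : ℝ := w ⬝ᵥ G.mulVec z with hB
    have hzne : z ≠ 0 := by
      intro h
      have hB0 : B = 0 := by rw [hB, h]; simp
      linarith
    have hQz : 0 < qform G z := hq_pos z hzne
    set t : ℝ := B / qform G z with htdef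
    have ht : 0 < t := div_pos hpos hQz
    have hmem : t • z ∈ tcone xstar := tcone_smul hz ht.le
    have hle := hVmin (t • z) hmem
    rw [hV0] at hle
    simp only [sub_zero] at hle
    rw [qform_sub hs] at hle
    have hsmul : w ⬝ᵥ G.mulVec (t • z) = t * B := by
      rw [Matrix.mulVec_smul, dotProduct_smul, smul_eq_mul, hB]
    have hqsmul : qform G (t • z) = t ^ 2 * qform G z := by
      simp only [qform, Matrix.mulVec_smul, dotProduct_smul, smul_dotProduct,
        smul_eq_mul]
      ring
    rw [hsmul, hqsmul] at hle
    -- qform G w ≤ qform G w - 2*(t*B) + t^2 * Q z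
    have h2 : 2 * (t * B) ≤ t ^ 2 * qform G z := by linarith
    have htq : t * qform G z = B := by
      rw [htdef, div_mul_cancel₀ _ hQz.ne']
    have : 2 * (t * B) ≤ t * B := by
      calc 2 * (t * B) ≤ t ^ 2 * qform G z := h2
        _ = t * (t * qform G z) := by ring
        _ = t * B := by rw [htq]
    nlinarith [mul_pos ht hpos]
  · -- Nash → V = 0
    intro hnash
    -- v xstar ⬝ᵥ V ≤ 0
    have hvV : v xstar ⬝ᵥ V ≤ 0 := by
      -- find t > 0 with xstar + t • V ∈ stdSimplex
      by_cases hVz : V = 0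
      · simp [hVz]
      · -- choose t = min over α of (if V α < 0 then xstar α / (-V α) else 1)
        classical
        set f : A → ℝ := fun α => if V α < 0 then xstar α / (-V α) else 1 with hf
        set t : ℝ := Finset.univ.inf' Finset.univ_nonempty f with htdef
        have hfpos : ∀ α, 0 < f α := by
          intro α
          by_cases h : V α < 0
          · have hxa : 0 < xstar α := by
              rcases lt_or_eq_of_le (hxstar.1 α) with h' | h'
              · exact h'
              · exact absurd (hVC.2 α h'.symm) (not_le.mpr h)
            simp only [hf, if_pos h]
            exact div_pos hxa (neg_pos.mpr h)
          · simp [hf, if_neg h]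
        have ht : 0 < t := by
          rw [htdef, Finset.lt_inf'_iff]
          exact fun α _ => hfpos α
        have hmem : xstar + t • V ∈ stdSimplex ℝ A := by
          constructor
          · intro α
            by_cases h : V α < 0
            · have htle : t ≤ xstar α / (-V α) := by
                have := Finset.inf'_le f (Finset.mem_univ α)
                rw [← htdef] at this
                simpa [hf, if_pos h] using this
              have : t * (-V α) ≤ xstar α := by
                rw [← le_div_iff₀ (neg_pos.mpr h)]
                exact htle
              simp only [Pi.add_apply, Pi.smul_apply, smul_eq_mul]
              linarith
            · push_neg at h
              have : 0 ≤ t * V α := mul_nonneg ht.le h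
              have := hxstar.1 α
              simp only [Pi.add_apply, Pi.smul_apply, smul_eq_mul]
              linarith
          · simp [Finset.sum_add_distrib, hxstar.2, ← Finset.mul_sum, hVC.1]
        have := hnash _ hmem
        have heq : (xstar + t • V) - xstar = t • V := by abel
        rw [heq] at this
        rw [dotProduct_smul, smul_eq_mul] at this
        nlinarith
    -- projection inequality with z = 0
    have h0 : (0 : A → ℝ) ∈ tcone xstar := ⟨by simp, fun α _ => le_rfl⟩
    have hle := hVmin 0 h0
    simp only [sub_zero] at hle
    rw [qform_sub hs] at hle
    rw [key V] at hle
    have hQV : qform G V ≤ 0 := by linarith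
    by_contra hVz
    exact absurd hQV (not_le.mpr (hq_pos V hVz))
end
end

section
/- Let A be a finite nonempty set, X the simplex in ℝ^A, v : X → ℝ^A continuous, and x* ∈ X a GESS of v. Let h be twice continuously differentiable on an open set containing X, with Hessian H(y) positive definite for every y ∈ X, and for each y ∈ X let V(y) be the H(y)-projection of H(y)⁻¹ v(y) onto TC_X(y) (discontinuous Hessian dynamics). Then along every solution x(t) = x(0) + ∫₀ᵗ V(x(s)) ds, the function t ↦ D_h(x*, x(t)) is nonincreasing and x(t) → x* as t → ∞. -/
open Matrix Filter

noncomputable section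

/-- The Hessian matrix of `h` at `y`. -/
def hessMat {A : Type*} [Fintype A] [DecidableEq A] (h : (A → ℝ) → ℝ) (y : A → ℝ) :
    Matrix A A ℝ :=
  Matrix.of fun α β => fderiv ℝ (fderiv ℝ h) y (Pi.single α 1) (Pi.single β 1)

section Aux

variable {A : Type*} [Fintype A] [DecidableEq A]

omit [Fintype A] in
lemma single_eq_smul (α : A) (c : ℝ) : Pi.single α c = c • (Pi.single α (1:ℝ) : A → ℝ) := by
  ext β
  by_cases hb : β = α <;> simp [Pi.single_apply, hb]

lemma clm_apply_eq_dot (B : (A → ℝ) →L[ℝ] (A → ℝ) →L[ℝ] ℝ) (w u : A → ℝ) :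
    B w u = w ⬝ᵥ (Matrix.of fun α β => B (Pi.single α 1) (Pi.single β 1)).mulVec u := by
  have hw : ∀ (p : A → ℝ) (L : (A → ℝ) →L[ℝ] ℝ), L p = ∑ α, p α * L (Pi.single α 1) := by
    intro p L
    conv_lhs => rw [← Finset.univ_sum_single p]
    rw [map_sum]
    refine Finset.sum_congr rfl fun α _ => ?_
    rw [single_eq_smul, L.map_smul, smul_eq_mul]
  have h1 : B w u = ∑ α, w α * B (Pi.single α 1) u := by
    conv_lhs => rw [← Finset.univ_sum_single w]
    rw [map_sum, ContinuousLinearMap.sum_apply]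
    refine Finset.sum_congr rfl fun α _ => ?_
    rw [single_eq_smul, B.map_smul]; rfl
  rw [h1]
  simp only [dotProduct, mulVec, Matrix.of_apply]
  refine Finset.sum_congr rfl fun α _ => ?_
  rw [hw u (B (Pi.single α 1)), Finset.mul_sum, Finset.mul_sum]
  refine Finset.sum_congr rfl fun β _ => by ring

omit [DecidableEq A] in
lemma qform_smul (G : Matrix A A ℝ) (c : ℝ) (w : A → ℝ) :
    qform G (c • w) = c^2 * qform G w := by
  simp only [qform, mulVec_smul, dotProduct_smul, smul_dotProduct, smul_eq_mul]
  ring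

omit [DecidableEq A] in
lemma qform_add (G : Matrix A A ℝ) (a b : A → ℝ) :
    qform G (a + b) = qform G a + a ⬝ᵥ G.mulVec b + b ⬝ᵥ G.mulVec a + qform G b := by
  simp only [qform, mulVec_add, dotProduct_add, add_dotProduct]
  ring

omit [DecidableEq A] in
lemma dot_mulVec_symm {G : Matrix A A ℝ} (hG : G.IsHermitian) (a b : A → ℝ) :
    a ⬝ᵥ G.mulVec b = b ⬝ᵥ G.mulVec a := by
  have hGt : Gᵀ = G := by
    ext i j
    have := congrFun (congrFun hG.eq i) j
    simpa [Matrix.conjTranspose_apply] using this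
  rw [dotProduct_mulVec, ← mulVec_transpose, hGt, dotProduct_comm]

lemma le_zero_of_le_lin {a c : ℝ} (hc : 0 ≤ c) (H : ∀ t : ℝ, 0 < t → t ≤ 1 → a ≤ t * c) :
    a ≤ 0 := by
  by_contra hlt
  push_neg at hlt
  rcases eq_or_lt_of_le hc with hc0 | hc0
  · have := H 1 one_pos le_rfl; rw [← hc0] at this; linarith
  · have ht : 0 < min 1 (a / (2 * c)) := by positivity
    have h1 := H _ ht (min_le_left _ _)
    have h2 : min 1 (a / (2 * c)) * c ≤ a / (2 * c) * c :=
      mul_le_mul_of_nonneg_right (min_le_right _ _) hc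
    have h3 : a / (2 * c) * c = a / 2 := by field_simp
    linarith

omit [DecidableEq A] in
lemma tcone_convex (y : A → ℝ) : Convex ℝ (tcone y) := by
  intro a ha b hb s t hs ht hst
  refine ⟨?_, fun α h0 => ?_⟩
  · simp only [Pi.add_apply, Pi.smul_apply, smul_eq_mul]
    rw [Finset.sum_add_distrib, ← Finset.mul_sum, ← Finset.mul_sum, ha.1, hb.1]
    ring
  · have := ha.2 α h0
    have := hb.2 α h0
    simp only [Pi.add_apply, Pi.smul_apply, smul_eq_mul]
    positivity

omit [DecidableEq A] in
lemma qform_nonneg {G : Matrix A A ℝ} (hG : G.PosDef) (w : A → ℝ) : 0 ≤ qform G w := by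
  have := hG.posSemidef.dotProduct_mulVec_nonneg w
  simpa [qform] using this

omit [DecidableEq A] in
lemma proj_vineq {G : Matrix A A ℝ} (hG : G.PosDef) {C : Set (A → ℝ)} (hC : Convex ℝ C)
    {w Vp : A → ℝ} (hP : IsGProj G C w Vp) :
    ∀ z ∈ C, (w - Vp) ⬝ᵥ G.mulVec (z - Vp) ≤ 0 := by
  intro z hz
  refine le_zero_of_le_lin (c := qform G (z - Vp) / 2)
    (by have := qform_nonneg hG (z - Vp); linarith) ?_
  intro t ht0 ht1
  have hmem : Vp + t • (z - Vp) ∈ C := by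
    have h2 : (1 - t) • Vp + t • z ∈ C := hC hP.1 hz (by linarith) ht0.le (by ring)
    have h3 : Vp + t • (z - Vp) = (1 - t) • Vp + t • z := by
      rw [smul_sub, sub_smul, one_smul]; abel
    rw [h3]; exact h2
  have hexp : qform G (w - (Vp + t • (z - Vp))) =
      qform G (w - Vp) - t * ((w - Vp) ⬝ᵥ G.mulVec (z - Vp))
        - t * ((z - Vp) ⬝ᵥ G.mulVec (w - Vp)) + t^2 * qform G (z - Vp) := by
    have h4 : w - (Vp + t • (z - Vp)) = (w - Vp) + (-t) • (z - Vp) := by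
      rw [neg_smul]; abel
    rw [h4, qform_add, qform_smul]
    simp only [mulVec_smul, dotProduct_smul, smul_dotProduct, smul_eq_mul, neg_mul]
    ring
  have hsym := dot_mulVec_symm hG.1 (w - Vp) (z - Vp)
  have hle := hP.2 _ hmem
  rw [hexp, ← hsym] at hle
  have h6 : 2 * t * ((w - Vp) ⬝ᵥ G.mulVec (z - Vp)) ≤ t^2 * qform G (z - Vp) := by linarith
  have h2t : (0:ℝ) < 2 * t := by linarith
  rw [← mul_le_mul_iff_right₀ h2t]
  calc 2 * t * ((w - Vp) ⬝ᵥ G.mulVec (z - Vp)) ≤ t^2 * qform G (z - Vp) := h6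
    _ = 2 * t * (t * (qform G (z - Vp) / 2)) := by ring

omit [DecidableEq A] in
lemma proj_orth {G : Matrix A A ℝ} (hG : G.PosDef) {y : A → ℝ} {w Vp : A → ℝ}
    (hP : IsGProj G (tcone y) w Vp) : (w - Vp) ⬝ᵥ G.mulVec Vp = 0 := by
  have h0 : (0 : A → ℝ) ∈ tcone y := ⟨by simp, fun α _ => le_rfl⟩
  have h2 : (2 : ℝ) • Vp ∈ tcone y := by
    obtain ⟨hs, hp⟩ := hP.1
    refine ⟨?_, fun α h => by
      have := hp α h
      simp only [Pi.smul_apply, smul_eq_mul]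
      linarith⟩
    simp only [Pi.smul_apply, smul_eq_mul, ← Finset.mul_sum, hs, mul_zero]
  have v1 := proj_vineq hG (tcone_convex y) hP 0 h0
  have v2 := proj_vineq hG (tcone_convex y) hP _ h2
  have e1 : (0 : A → ℝ) - Vp = (-1 : ℝ) • Vp := by ext; simp
  have e2 : (2 : ℝ) • Vp - Vp = Vp := by ext; simp; ring
  rw [e1] at v1
  rw [e2] at v2
  simp only [mulVec_smul, dotProduct_smul, smul_eq_mul, neg_one_mul, neg_nonpos] at v1
  linarith

lemma proj_key {G : Matrix A A ℝ} (hG : G.PosDef) {y xstar vy Vy : A → ℝ}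
    (hy : y ∈ stdSimplex ℝ A) (hxs : xstar ∈ stdSimplex ℝ A)
    (hP : IsGProj G (tcone y) (G⁻¹.mulVec vy) Vy) :
    vy ⬝ᵥ (xstar - y) ≤ Vy ⬝ᵥ G.mulVec (xstar - y) := by
  have hz : xstar - y ∈ tcone y := by
    refine ⟨?_, fun α h0 => ?_⟩
    · simp only [Pi.sub_apply, Finset.sum_sub_distrib, hxs.2, hy.2, sub_self]
    · simp only [Pi.sub_apply, h0, sub_zero]; exact hxs.1 α
  have v1 := proj_vineq hG (tcone_convex y) hP _ hz
  have orth := proj_orth hG hP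
  set w := G⁻¹.mulVec vy with hw
  have hexp : (w - Vy) ⬝ᵥ G.mulVec (xstar - y - Vy)
      = (w - Vy) ⬝ᵥ G.mulVec (xstar - y) - (w - Vy) ⬝ᵥ G.mulVec Vy := by
    rw [sub_eq_add_neg (xstar - y) Vy, mulVec_add, dotProduct_add, mulVec_neg, dotProduct_neg]
    ring
  rw [hexp, orth, sub_zero] at v1
  have hdot : w ⬝ᵥ G.mulVec (xstar - y) = vy ⬝ᵥ (xstar - y) := by
    have hGt : Gᵀ = G := by
      ext i j
      have := congrFun (congrFun hG.1.eq i) j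
      simpa [Matrix.conjTranspose_apply] using this
    have hunit : IsUnit G.det := hG.det_pos.ne'.isUnit
    calc w ⬝ᵥ G.mulVec (xstar - y) = (w ᵥ* G) ⬝ᵥ (xstar - y) := dotProduct_mulVec _ _ _
      _ = (Gᵀ *ᵥ w) ⬝ᵥ (xstar - y) := by rw [mulVec_transpose]
      _ = ((G * G⁻¹) *ᵥ vy) ⬝ᵥ (xstar - y) := by rw [hGt, hw, mulVec_mulVec]
      _ = vy ⬝ᵥ (xstar - y) := by rw [Matrix.mul_nonsing_inv _ hunit, one_mulVec]
  have hws : (w - Vy) ⬝ᵥ G.mulVec (xstar - y)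
      = w ⬝ᵥ G.mulVec (xstar - y) - Vy ⬝ᵥ G.mulVec (xstar - y) := by
    rw [sub_dotProduct]
  rw [hws, hdot] at v1
  linarith

omit [DecidableEq A] in
lemma proj_qform_le {G : Matrix A A ℝ} (hG : G.PosDef) {y : A → ℝ} {w Vp : A → ℝ}
    (hP : IsGProj G (tcone y) w Vp) : qform G Vp ≤ qform G w := by
  have orth := proj_orth hG hP
  have hsym := dot_mulVec_symm hG.1 (w - Vp) Vp
  have hdec : qform G w = qform G (w - Vp) + (w - Vp) ⬝ᵥ G.mulVec Vp
      + Vp ⬝ᵥ G.mulVec (w - Vp) + qform G Vp := by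
    have hw : w = (w - Vp) + Vp := by abel
    conv_lhs => rw [hw]
    rw [qform_add]
  have hnn := qform_nonneg hG (w - Vp)
  rw [orth, ← hsym, orth] at hdec
  linarith

/-- The Bregman divergence `D_h(x*, ·)`. -/
def breg (h : (A → ℝ) → ℝ) (xstar y : A → ℝ) : ℝ :=
  h xstar - h y - fderiv ℝ h y (xstar - y)

lemma hess_flip_apply (h : (A → ℝ) → ℝ) (y u w : A → ℝ) :
    ((fderiv ℝ (fderiv ℝ h) y).flip u) w = w ⬝ᵥ (hessMat h y).mulVec u := by
  rw [ContinuousLinearMap.flip_apply]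
  exact clm_apply_eq_dot _ _ _

omit [DecidableEq A] in
lemma breg_hasFDerivAt {h : (A → ℝ) → ℝ} {U : Set (A → ℝ)} (hU : IsOpen U)
    (hh : ContDiffOn ℝ 2 h U) (xstar : A → ℝ) {y : A → ℝ} (hy : y ∈ U) :
    HasFDerivAt (breg h xstar) (-((fderiv ℝ (fderiv ℝ h) y).flip (xstar - y))) y := by
  have hh1 : ContDiffOn ℝ 1 (fderiv ℝ h) U := hh.fderiv_of_isOpen hU (by norm_num)
  have hdh : HasFDerivAt h (fderiv ℝ h y) y :=
    ((hh.differentiableOn two_ne_zero).differentiableAt (hU.mem_nhds hy)).hasFDerivAt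
  have hd1 : HasFDerivAt (fderiv ℝ h) (fderiv ℝ (fderiv ℝ h) y) y :=
    ((hh1.differentiableOn one_ne_zero).differentiableAt (hU.mem_nhds hy)).hasFDerivAt
  have hu : HasFDerivAt (fun z => xstar - z) (-(ContinuousLinearMap.id ℝ (A → ℝ))) y :=
    (hasFDerivAt_id y).const_sub xstar
  have hB := hd1.clm_apply hu
  have hg := ((hdh.add hB).const_sub (h xstar))
  have : (breg h xstar) = fun z => h xstar - (h z + fderiv ℝ h z (xstar - z)) := by
    funext z; simp [breg]; ring
  rw [this]
  refine hg.congr_fderiv ?_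
  ext w
  simp [ContinuousLinearMap.comp_apply]

end Aux

set_option maxHeartbeats 1000000 in
/-- global asymptotic stability of a GESS under discontinuous Hessian dynamics.
Along every Carathéodory solution of `ẋ = V(x)`, where `V(y)` is the `H(y)`-projection of
`H(y)⁻¹ v(y)` onto `TC_X(y)` and `H = Hess h` is positive definite on the simplex, the
Bregman divergence `D_h(x*, x(t))` is nonincreasing and `x(t) → x*`. -/
theorem stmt_9 {A : Type*} [Fintype A] [DecidableEq A] [Nonempty A]
    (v : (A → ℝ) → (A → ℝ)) (hvcont : ContinuousOn v (stdSimplex ℝ A))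
    (xstar : A → ℝ) (hxstarX : xstar ∈ stdSimplex ℝ A)
    (hGESS : ∀ y ∈ stdSimplex ℝ A,
      v y ⬝ᵥ (y - xstar) ≤ 0 ∧ (v y ⬝ᵥ (y - xstar) = 0 → y = xstar))
    (h : (A → ℝ) → ℝ) (U : Set (A → ℝ)) (hU : IsOpen U) (hXU : stdSimplex ℝ A ⊆ U)
    (hh : ContDiffOn ℝ 2 h U)
    (hpd : ∀ y ∈ stdSimplex ℝ A, (hessMat h y).PosDef)
    (V : (A → ℝ) → (A → ℝ))
    (hV : ∀ y ∈ stdSimplex ℝ A,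
      IsGProj (hessMat h y) (tcone y) ((hessMat h y)⁻¹.mulVec (v y)) (V y))
    (x : ℝ → (A → ℝ)) (hxX : ∀ t : ℝ, 0 ≤ t → x t ∈ stdSimplex ℝ A)
    (hxcont : ContinuousOn x (Set.Ici 0))
    (hloc : ∀ t : ℝ, 0 ≤ t → IntervalIntegrable (fun s => V (x s)) MeasureTheory.volume 0 t)
    (hsol : ∀ t : ℝ, 0 ≤ t → x t = x 0 + ∫ s in (0:ℝ)..t, V (x s)) :
    (∀ s t : ℝ, 0 ≤ s → s ≤ t →
      h xstar - h (x t) - fderiv ℝ h (x t) (xstar - x t) ≤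
        h xstar - h (x s) - fderiv ℝ h (x s) (xstar - x s)) ∧
    Tendsto (fun t => x t) atTop (nhds xstar) := by
  classical
  set S := stdSimplex ℝ A with hSdef
  set g := breg h xstar with hgdef
  set psi : (A → ℝ) → ℝ := fun y => v y ⬝ᵥ (y - xstar) with hpsidef
  set Γfun : (A → ℝ) → ((A → ℝ) →L[ℝ] ℝ) :=
    fun y => -((fderiv ℝ (fderiv ℝ h) y).flip (xstar - y)) with hΓdef
  have hScomp : IsCompact S := isCompact_stdSimplex ℝ A
  have hSconv : Convex ℝ S := convex_stdSimplex ℝ A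
  -- derivatives and continuity
  have hderiv : ∀ y ∈ U, HasFDerivAt g (Γfun y) y := fun y hy => breg_hasFDerivAt hU hh xstar hy
  have hh1 : ContDiffOn ℝ 1 (fderiv ℝ h) U := hh.fderiv_of_isOpen hU (by norm_num)
  have hD2cont : ContinuousOn (fun y => fderiv ℝ (fderiv ℝ h) y) U :=
    hh1.continuousOn_fderiv_of_isOpen hU le_rfl
  have hD1cont : ContinuousOn (fderiv ℝ h) U := hh1.continuousOn
  have hgcont : ContinuousOn g U := by
    refine (continuousOn_const.sub hh.continuousOn).sub ?_
    exact hD1cont.clm_apply (continuousOn_const.sub continuousOn_id)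
  have hΓcont : ContinuousOn Γfun U := by
    refine ContinuousOn.neg (ContinuousOn.clm_apply ?_ (continuousOn_const.sub continuousOn_id))
    have := (ContinuousLinearMap.flipₗᵢ ℝ (A → ℝ) (A → ℝ) ℝ).continuous.comp_continuousOn hD2cont
    exact this
  have hψcont : ContinuousOn psi S := by
    have : ContinuousOn (fun y : A → ℝ => ∑ α, v y α * (y α - xstar α)) S := by
      refine continuousOn_finset_sum _ fun α _ => ContinuousOn.mul ?_ ?_
      · exact (continuous_apply α).comp_continuousOn hvcont
      · exact ((continuous_apply α).continuousOn).sub continuousOn_const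
    exact this.congr fun y hy => by simp [hpsidef, dotProduct]
  have hseg : ∀ {a b : A → ℝ}, a ∈ S → b ∈ S → ∀ {θ : ℝ}, 0 ≤ θ → θ ≤ 1 →
      a + θ • (b - a) ∈ S := by
    intro a b ha hb θ h0 h1
    have h2 := hSconv ha hb (by linarith : (0:ℝ) ≤ 1 - θ) h0 (by ring)
    have h3 : a + θ • (b - a) = (1 - θ) • a + θ • b := by
      rw [smul_sub, sub_smul, one_smul]; abel
    rw [h3]; exact h2
  -- key pointwise inequality
  have hkey : ∀ y ∈ S, Γfun y (V y) ≤ psi y := by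
    intro y hy
    have hp := proj_key (hpd y hy) hy hxstarX (hV y hy)
    have e : Γfun y (V y) = -(V y ⬝ᵥ (hessMat h y).mulVec (xstar - y)) := by
      rw [hΓdef]
      simp only [ContinuousLinearMap.neg_apply, hess_flip_apply]
    have e3 : v y ⬝ᵥ (xstar - y) = v y ⬝ᵥ xstar - v y ⬝ᵥ y := dotProduct_sub _ _ _
    have e4 : psi y = v y ⬝ᵥ y - v y ⬝ᵥ xstar := by
      rw [hpsidef]; exact dotProduct_sub _ _ _
    rw [e, e4]
    linarith
  -- the quadratic form is continuous in (y, u)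
  have hq2cont : ContinuousOn (fun p : (A → ℝ) × (A → ℝ) => qform (hessMat h p.1) p.2)
      (U ×ˢ (Set.univ : Set (A → ℝ))) := by
    have hD2fst : ContinuousOn (fun p : (A → ℝ) × (A → ℝ) => fderiv ℝ (fderiv ℝ h) p.1)
        (U ×ˢ (Set.univ : Set (A → ℝ))) :=
      hD2cont.comp continuousOn_fst fun p hp => hp.1
    refine ContinuousOn.congr (f := fun p : (A → ℝ) × (A → ℝ) =>
        ∑ α, p.2 α * ∑ β, fderiv ℝ (fderiv ℝ h) p.1 (Pi.single α 1) (Pi.single β 1) * p.2 β)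
      ?_ ?_
    · refine continuousOn_finset_sum _ fun α _ => ContinuousOn.mul ?_ ?_
      · exact ((continuous_apply α).comp continuous_snd).continuousOn
      · refine continuousOn_finset_sum _ fun β _ => ContinuousOn.mul ?_ ?_
        · exact (hD2fst.clm_apply continuousOn_const).clm_apply continuousOn_const
        · exact ((continuous_apply β).comp continuous_snd).continuousOn
    · intro p hp
      simp [qform, dotProduct, mulVec, hessMat]
  -- uniform positive-definiteness
  obtain ⟨lam, hlam0, hlam⟩ : ∃ lam : ℝ, 0 < lam ∧
      ∀ y ∈ S, ∀ u : A → ℝ, lam * ‖u‖^2 ≤ qform (hessMat h y) u := by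
    obtain ⟨u1, hu1⟩ : (Metric.sphere (0 : A → ℝ) 1).Nonempty :=
      NormedSpace.sphere_nonempty.mpr zero_le_one
    have hKcomp : IsCompact (S ×ˢ Metric.sphere (0 : A → ℝ) 1) :=
      hScomp.prod (isCompact_sphere _ _)
    have hKne : (S ×ˢ Metric.sphere (0 : A → ℝ) 1).Nonempty := ⟨(xstar, u1), hxstarX, hu1⟩
    obtain ⟨p0, hp0, hmin⟩ := hKcomp.exists_isMinOn hKne
      (hq2cont.mono (Set.prod_mono hXU (Set.subset_univ _)))
    refine ⟨qform (hessMat h p0.1) p0.2, ?_, ?_⟩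
    · have hnp : ‖p0.2‖ = 1 := by
        have := hp0.2
        simpa [Metric.mem_sphere, dist_eq_norm] using this
      have hne : p0.2 ≠ 0 := by
        intro hc; rw [hc] at hnp; simp at hnp
      have := (hpd p0.1 hp0.1).dotProduct_mulVec_pos hne
      simpa [qform] using this
    · intro y hy u
      rcases eq_or_ne u 0 with rfl | hu
      · simp [qform]
      · have hnorm : ‖u‖ ≠ 0 := norm_ne_zero_iff.mpr hu
        have hmem : (y, ‖u‖⁻¹ • u) ∈ S ×ˢ Metric.sphere (0 : A → ℝ) 1 := by
          refine ⟨hy, ?_⟩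
          simp [Metric.mem_sphere, dist_eq_norm, norm_smul,
            abs_of_nonneg (inv_nonneg.mpr (norm_nonneg u)), inv_mul_cancel₀ hnorm]
        have h5 := isMinOn_iff.mp hmin _ hmem
        have h6 : qform (hessMat h y) u = ‖u‖^2 * qform (hessMat h y) (‖u‖⁻¹ • u) := by
          conv_lhs => rw [show u = ‖u‖ • (‖u‖⁻¹ • u) by
            rw [smul_smul, mul_inv_cancel₀ hnorm, one_smul]]
          rw [qform_smul]
        calc qform (hessMat h p0.1) p0.2 * ‖u‖^2
            ≤ qform (hessMat h y) (‖u‖⁻¹ • u) * ‖u‖^2 :=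
              mul_le_mul_of_nonneg_right h5 (sq_nonneg _)
          _ = qform (hessMat h y) u := by rw [h6]; ring
  -- uniform bound on V
  obtain ⟨M, hM0, hMb⟩ : ∃ M : ℝ, 0 ≤ M ∧ ∀ y ∈ S, ‖V y‖ ≤ M := by
    have hHcont : ContinuousOn (fun y => hessMat h y) U := by
      rw [continuousOn_iff_continuous_restrict]
      refine continuous_matrix fun α β => ?_
      exact continuousOn_iff_continuous_restrict.mp
        ((hD2cont.clm_apply continuousOn_const).clm_apply continuousOn_const)
    have hdet : ContinuousOn (fun y => (hessMat h y).det) U :=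
      (Continuous.matrix_det continuous_id).comp_continuousOn hHcont
    have hadj : ContinuousOn (fun y => (hessMat h y).adjugate) U :=
      (Continuous.matrix_adjugate continuous_id).comp_continuousOn hHcont
    have hinvc : ContinuousOn (fun y => (hessMat h y)⁻¹) S := by
      refine ContinuousOn.congr
        (f := fun y => ((hessMat h y).det)⁻¹ • (hessMat h y).adjugate) ?_ ?_
      · exact ((hdet.mono hXU).inv₀ fun y hy => (hpd y hy).det_pos.ne').smul (hadj.mono hXU)
      · intro y hy
        show (hessMat h y)⁻¹ = ((hessMat h y).det)⁻¹ • (hessMat h y).adjugate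
        rw [Matrix.inv_def, Ring.inverse_eq_inv']
    have hw0cont : ContinuousOn (fun y => (hessMat h y)⁻¹ *ᵥ v y) S := by
      refine continuousOn_pi.2 fun α => ?_
      refine ContinuousOn.congr (f := fun y => ∑ β, (hessMat h y)⁻¹ α β * v y β) ?_ ?_
      · refine continuousOn_finset_sum _ fun β _ => ContinuousOn.mul ?_ ?_
        · exact ((continuous_apply β).comp (continuous_apply α)).comp_continuousOn hinvc
        · exact (continuous_apply β).comp_continuousOn hvcont
      · intro y hy
        simp [mulVec, dotProduct]
    have hqV : ContinuousOn (fun y => qform (hessMat h y) ((hessMat h y)⁻¹ *ᵥ v y)) S := by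
      have hmap : Set.MapsTo (fun y => (y, (hessMat h y)⁻¹ *ᵥ v y)) S
          (U ×ˢ (Set.univ : Set (A → ℝ))) := fun y hy => ⟨hXU hy, trivial⟩
      exact hq2cont.comp (continuousOn_id.prodMk hw0cont) hmap
    obtain ⟨yC, hyC, hCmax⟩ := hScomp.exists_isMaxOn ⟨xstar, hxstarX⟩ hqV
    set Cq := qform (hessMat h yC) ((hessMat h yC)⁻¹ *ᵥ v yC) with hCq
    refine ⟨Real.sqrt (Cq / lam), Real.sqrt_nonneg _, ?_⟩
    intro y hy
    have h1 := hlam y hy (V y)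
    have h2 := proj_qform_le (hpd y hy) (hV y hy)
    have h3 := isMaxOn_iff.mp hCmax y hy
    have h4 : ‖V y‖^2 ≤ Cq / lam := by
      rw [le_div_iff₀ hlam0, mul_comm]
      calc lam * ‖V y‖^2 ≤ qform (hessMat h y) (V y) := h1
        _ ≤ qform (hessMat h y) ((hessMat h y)⁻¹ *ᵥ v y) := h2
        _ ≤ Cq := h3
    exact (Real.le_sqrt (norm_nonneg _) (le_trans (sq_nonneg _) h4)).2 h4
  -- basic integrability
  have hint : ∀ a b : ℝ, 0 ≤ a → 0 ≤ b →
      IntervalIntegrable (fun u => V (x u)) MeasureTheory.volume a b :=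
    fun a b ha hb => (hloc a ha).symm.trans (hloc b hb)
  have hdiff : ∀ a b : ℝ, 0 ≤ a → 0 ≤ b →
      x b - x a = ∫ u in a..b, V (x u) := by
    intro a b ha hb
    have e : x b - x a = (∫ u in (0:ℝ)..b, V (x u)) - ∫ u in (0:ℝ)..a, V (x u) := by
      rw [hsol b hb, hsol a ha]; abel
    rw [e, intervalIntegral.integral_interval_sub_left (hloc b hb) (hloc a ha)]
  -- x is Lipschitz
  have hlip : ∀ a b : ℝ, 0 ≤ a → a ≤ b → ‖x b - x a‖ ≤ M * (b - a) := by
    intro a b ha hab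
    rw [hdiff a b ha (le_trans ha hab)]
    have := intervalIntegral.norm_integral_le_of_norm_le_const (C := M)
      (f := fun u => V (x u)) (a := a) (b := b) ?_
    · rwa [abs_of_nonneg (by linarith)] at this
    · intro u hu
      rw [Set.uIoc_of_le hab] at hu
      exact hMb (x u) (hxX u (le_trans ha hu.1.le))
  have hpsix : ContinuousOn (fun u => psi (x u)) (Set.Ici 0) :=
    hψcont.comp hxcont fun u hu => hxX u hu
  -- the fundamental decrease estimate
  have lemA : ∀ s t : ℝ, 0 ≤ s → s ≤ t →
      g (x t) - g (x s) ≤ ∫ u in s..t, psi (x u) := by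
    intro s t hs hst
    rcases eq_or_lt_of_le hst with rfl | hlt
    · simp
    have hpsiint : IntervalIntegrable (fun u => psi (x u)) MeasureTheory.volume s t := by
      refine (hpsix.mono ?_).intervalIntegrable
      rw [Set.uIcc_of_le hst]
      exact fun u hu => le_trans hs hu.1
    have main : ∀ ε : ℝ, 0 < ε →
        g (x t) - g (x s) ≤ (∫ u in s..t, psi (x u)) + ε * (t - s) := by
      intro ε hε
      have hΓu := hScomp.uniformContinuousOn_of_continuous (hΓcont.mono hXU)
      rw [Metric.uniformContinuousOn_iff] at hΓu
      obtain ⟨δ, hδ0, hδ⟩ := hΓu (ε / (M + 1)) (by positivity)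
      obtain ⟨n, hn⟩ := exists_nat_gt (2 * (M + 1) * (t - s) / δ)
      have hnum0 : (0:ℝ) ≤ 2 * (M + 1) * (t - s) / δ := by
        apply div_nonneg _ hδ0.le
        nlinarith
      have hnpos : 0 < (n:ℝ) := lt_of_le_of_lt hnum0 hn
      set Δ : ℝ := (t - s) / n with hΔ
      have hΔ0 : 0 < Δ := div_pos (by linarith) hnpos
      set τ : ℕ → ℝ := fun i => s + i * Δ with hτ
      have hτ0 : τ 0 = s := by simp [hτ]
      have hnΔ : (n:ℝ) * Δ = t - s := by
        rw [hΔ]; field_simp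
      have hτn : τ n = t := by
        simp only [hτ]; rw [hnΔ]; ring
      have hτmono : ∀ i : ℕ, τ i ≤ τ (i+1) := by
        intro i
        simp only [hτ]
        push_cast
        nlinarith [hΔ0.le]
      have hτnn : ∀ i : ℕ, i ≤ n → 0 ≤ τ i ∧ τ i ≤ t := by
        intro i hi
        constructor
        · have h1 : (0:ℝ) ≤ i * Δ := by positivity
          simp only [hτ]; linarith
        · have h1 : (i:ℝ) ≤ n := Nat.cast_le.mpr hi
          have h2 : (i:ℝ) * Δ ≤ n * Δ := mul_le_mul_of_nonneg_right h1 hΔ0.le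
          simp only [hτ]; linarith [hnΔ]
      have hmesh : 2 * M * Δ < δ := by
        have h2 : 2 * (M + 1) * (t - s) < n * δ := by
          have := (div_lt_iff₀ hδ0).mp hn
          linarith [this, mul_comm (n:ℝ) δ]
        have h3 : 2 * (M + 1) * Δ < δ := by
          rw [hΔ, ← mul_div_assoc, div_lt_iff₀ hnpos]
          have hcm : (n:ℝ) * δ = δ * n := mul_comm _ _
          linarith
        nlinarith [hΔ0.le]
      have hRint : ∀ k : ℕ, k ≤ n → IntervalIntegrable (fun u => psi (x u) + ε)
          MeasureTheory.volume (τ k) (τ (k+1)) := by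
        intro k hk
        by_cases hkn : k < n
        · refine ((hpsix.mono ?_).add continuousOn_const).intervalIntegrable
          rw [Set.uIcc_of_le (hτmono k)]
          exact fun u hu => le_trans (hτnn k hk).1 hu.1
        · refine ((hpsix.mono ?_).add continuousOn_const).intervalIntegrable
          intro u hu
          rcases Set.mem_uIcc.mp hu with h | h
          · exact le_trans (hτnn k hk).1 h.1
          · exact le_trans (le_trans (hτnn k hk).1 (hτmono k)) h.1
      have key : ∀ i : ℕ, i < n → g (x (τ (i+1))) - g (x (τ i))
          ≤ ∫ u in τ i..τ (i+1), (psi (x u) + ε) := by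
        intro i hi
        have h0i : 0 ≤ τ i := (hτnn i hi.le).1
        have h0i1 : 0 ≤ τ (i+1) := (hτnn (i+1) hi).1
        have hii1 : τ i ≤ τ (i+1) := hτmono i
        have hstep : τ (i+1) - τ i = Δ := by
          simp only [hτ]; push_cast; ring
        set a := x (τ i) with ha
        set b := x (τ (i+1)) with hb
        have haS : a ∈ S := hxX _ h0i
        have hbS : b ∈ S := hxX _ h0i1
        have hlineS : ∀ θ : ℝ, θ ∈ Set.Icc (0:ℝ) 1 → a + θ • (b - a) ∈ S :=
          fun θ hθ => hseg haS hbS hθ.1 hθ.2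
        have hcont1 : ContinuousOn (fun θ : ℝ => g (a + θ • (b - a))) (Set.Icc 0 1) :=
          hgcont.comp ((continuous_const.add (continuous_id.smul continuous_const)).continuousOn)
            (fun θ hθ => hXU (hlineS θ hθ))
        have hder1 : ∀ θ ∈ Set.Ioo (0:ℝ) 1, HasDerivAt (fun θ : ℝ => g (a + θ • (b - a)))
            (Γfun (a + θ • (b - a)) (b - a)) θ := by
          intro θ hθ
          have hγ : HasDerivAt (fun θ : ℝ => a + θ • (b - a)) (b - a) θ := by
            have := ((hasDerivAt_id θ).smul_const (b - a)).const_add a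
            simpa using this
          exact (hderiv _ (hXU (hlineS θ ⟨hθ.1.le, hθ.2.le⟩))).comp_hasDerivAt θ hγ
        obtain ⟨θc, hθc, hslope⟩ := exists_hasDerivAt_eq_slope _ _ one_pos hcont1 hder1
        set c := a + θc • (b - a) with hc
        have hcS : c ∈ S := hlineS θc ⟨hθc.1.le, hθc.2.le⟩
        have hgba : g b - g a = Γfun c (b - a) := by
          have e1 : a + (b - a) = b := by abel
          simp only [one_smul, zero_smul, add_zero, sub_zero, div_one, e1] at hslope
          rw [hslope]
        have hba : b - a = ∫ u in τ i..τ (i+1), V (x u) := hdiff _ _ h0i h0i1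
        have hVi : IntervalIntegrable (fun u => V (x u)) MeasureTheory.volume (τ i) (τ (i+1)) :=
          hint _ _ h0i h0i1
        have hΓint : Γfun c (b - a) = ∫ u in τ i..τ (i+1), Γfun c (V (x u)) := by
          rw [hba, ContinuousLinearMap.intervalIntegral_comp_comm _ hVi]
        have hpt : ∀ u ∈ Set.Icc (τ i) (τ (i+1)), Γfun c (V (x u)) ≤ psi (x u) + ε := by
          intro u hu
          have h0u : 0 ≤ u := le_trans h0i hu.1
          have hxuS : x u ∈ S := hxX u h0u
          have hdca : dist c a ≤ M * Δ := by
            rw [dist_eq_norm]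
            have e2 : c - a = θc • (b - a) := by rw [hc]; abel
            rw [e2, norm_smul]
            have h1 : ‖b - a‖ ≤ M * Δ := by
              have := hlip (τ i) (τ (i+1)) h0i hii1
              rw [hstep] at this
              exact this
            have h2 : |θc| ≤ 1 := by
              rw [abs_of_pos hθc.1]; exact hθc.2.le
            calc |θc| * ‖b - a‖ ≤ 1 * (M * Δ) :=
                  mul_le_mul h2 h1 (norm_nonneg _) one_pos.le
              _ = M * Δ := one_mul _
          have hdax : dist a (x u) ≤ M * Δ := by
            rw [dist_eq_norm']
            have h2 : u - τ i ≤ Δ := by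
              have := hu.2; linarith [hstep]
            calc ‖x u - a‖ ≤ M * (u - τ i) := hlip (τ i) u h0i hu.1
              _ ≤ M * Δ := mul_le_mul_of_nonneg_left h2 hM0
          have hdcx : dist c (x u) < δ := by
            have h1 := dist_triangle c a (x u)
            linarith
          have hΓnear := hδ c hcS (x u) hxuS hdcx
          have e5 : Γfun c (V (x u)) = Γfun (x u) (V (x u))
              + (Γfun c - Γfun (x u)) (V (x u)) := by
            simp [ContinuousLinearMap.sub_apply]
          have e6 : (Γfun c - Γfun (x u)) (V (x u)) ≤ ε := by
            have h7 : (Γfun c - Γfun (x u)) (V (x u))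
                ≤ ‖(Γfun c - Γfun (x u)) (V (x u))‖ := le_abs_self _
            have h8 := (Γfun c - Γfun (x u)).le_opNorm (V (x u))
            have h9 : ‖Γfun c - Γfun (x u)‖ ≤ ε / (M + 1) := by
              rw [← dist_eq_norm]; exact hΓnear.le
            have h10 : ‖V (x u)‖ ≤ M := hMb _ hxuS
            calc (Γfun c - Γfun (x u)) (V (x u))
                ≤ ‖(Γfun c - Γfun (x u)) (V (x u))‖ := h7
              _ ≤ ‖Γfun c - Γfun (x u)‖ * ‖V (x u)‖ := h8
              _ ≤ (ε / (M + 1)) * M := by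
                  refine mul_le_mul h9 h10 (norm_nonneg _) ?_
                  positivity
              _ ≤ ε := by
                  rw [div_mul_eq_mul_div, div_le_iff₀ (by positivity : (0:ℝ) < M + 1)]
                  nlinarith
          have h11 := hkey (x u) hxuS
          rw [e5] at *
          linarith
        have hLHSint : IntervalIntegrable (fun u => Γfun c (V (x u)))
            MeasureTheory.volume (τ i) (τ (i+1)) :=
          ⟨(Γfun c).integrable_comp hVi.1, (Γfun c).integrable_comp hVi.2⟩
        have hmon := intervalIntegral.integral_mono_on hii1 hLHSint (hRint i hi.le) hpt
        rw [hgba, hΓint]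
        exact hmon
      have hsum1 : ∑ i ∈ Finset.range n, (g (x (τ (i+1))) - g (x (τ i)))
          = g (x t) - g (x s) := by
        rw [Finset.sum_range_sub (fun i => g (x (τ i))), hτn, hτ0]
      have hsum2 := intervalIntegral.sum_integral_adjacent_intervals
        (μ := MeasureTheory.volume) (a := τ) (n := n)
        (fun k hk => hRint k hk.le)
      have hfinal : g (x t) - g (x s) ≤ ∫ u in s..t, (psi (x u) + ε) := by
        rw [← hsum1, ← hτ0, ← hτn, ← hsum2]
        exact Finset.sum_le_sum fun i hi => key i (Finset.mem_range.mp hi)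
      have hsplit : (∫ u in s..t, (psi (x u) + ε))
          = (∫ u in s..t, psi (x u)) + ε * (t - s) := by
        rw [intervalIntegral.integral_add hpsiint intervalIntegrable_const,
          intervalIntegral.integral_const]
        simp only [smul_eq_mul]
        ring
      linarith
    by_contra hcon
    push_neg at hcon
    set I := ∫ u in s..t, psi (x u) with hI
    have hgap : 0 < g (x t) - g (x s) - I := by linarith
    have hts : 0 < t - s := by linarith
    have hmm := main ((g (x t) - g (x s) - I) / (2 * (t - s))) (by positivity)
    have he : (g (x t) - g (x s) - I) / (2 * (t - s)) * (t - s)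
        = (g (x t) - g (x s) - I) / 2 := by
      field_simp
    rw [he] at hmm
    linarith
  -- monotonicity
  have hmono : ∀ s t : ℝ, 0 ≤ s → s ≤ t → g (x t) ≤ g (x s) := by
    intro s t hs hst
    have h1 := lemA s t hs hst
    have h2 : (∫ u in s..t, psi (x u)) ≤ 0 := by
      have h3 : (∫ u in s..t, psi (x u)) ≤ ∫ u in s..t, (0:ℝ) := by
        refine intervalIntegral.integral_mono_on hst ?_ intervalIntegrable_const ?_
        · refine (hpsix.mono ?_).intervalIntegrable
          rw [Set.uIcc_of_le hst]
          exact fun u hu => le_trans hs hu.1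
        · exact fun u hu => (hGESS (x u) (hxX u (le_trans hs hu.1))).1
      simpa using h3
    linarith
  -- strict positivity of the Bregman divergence (Taylor lower bound)
  have hglb : ∀ y ∈ S, lam / 2 * ‖xstar - y‖^2 ≤ g y := by
    intro y hy
    set d := xstar - y with hd
    set φ' : ℝ → ℝ := fun θ => fderiv ℝ h (y + θ • d) d with hφ'
    have hlineS : ∀ θ : ℝ, θ ∈ Set.Icc (0:ℝ) 1 → y + θ • d ∈ S :=
      fun θ hθ => hseg hy hxstarX hθ.1 hθ.2
    have hγline : ∀ θ : ℝ, HasDerivAt (fun θ : ℝ => y + θ • d) d θ := by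
      intro θ
      have := ((hasDerivAt_id θ).smul_const d).const_add y
      simpa using this
    have hφd : ∀ θ ∈ Set.Icc (0:ℝ) 1, HasDerivAt (fun θ : ℝ => h (y + θ • d)) (φ' θ) θ := by
      intro θ hθ
      have hfd : HasFDerivAt h (fderiv ℝ h (y + θ • d)) (y + θ • d) :=
        ((hh.differentiableOn two_ne_zero).differentiableAt
          (hU.mem_nhds (hXU (hlineS θ hθ)))).hasFDerivAt
      exact hfd.comp_hasDerivAt θ (hγline θ)
    have hφ'd : ∀ θ ∈ Set.Icc (0:ℝ) 1, HasDerivAt φ'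
        (fderiv ℝ (fderiv ℝ h) (y + θ • d) d d) θ := by
      intro θ hθ
      have hd1 : HasFDerivAt (fderiv ℝ h) (fderiv ℝ (fderiv ℝ h) (y + θ • d)) (y + θ • d) :=
        ((hh1.differentiableOn one_ne_zero).differentiableAt
          (hU.mem_nhds (hXU (hlineS θ hθ)))).hasFDerivAt
      have hcomp : HasDerivAt (fun θ : ℝ => fderiv ℝ h (y + θ • d))
          (fderiv ℝ (fderiv ℝ h) (y + θ • d) d) θ := hd1.comp_hasDerivAt θ (hγline θ)
      have := hcomp.clm_apply (hasDerivAt_const θ d)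
      simpa using this
    set m := lam * ‖d‖^2 with hm
    have hqlow : ∀ θ ∈ Set.Icc (0:ℝ) 1, m ≤ fderiv ℝ (fderiv ℝ h) (y + θ • d) d d := by
      intro θ hθ
      have h1 := hlam (y + θ • d) (hlineS θ hθ) d
      rw [clm_apply_eq_dot]
      exact h1
    have hmono' : ∀ θ ∈ Set.Icc (0:ℝ) 1, φ' 0 + m * θ ≤ φ' θ := by
      intro θ hθ
      set uf : ℝ → ℝ := fun θ => φ' θ - m * θ with huf
      have hufd : ∀ σ ∈ Set.Icc (0:ℝ) 1, HasDerivAt uf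
          (fderiv ℝ (fderiv ℝ h) (y + σ • d) d d - m) σ := by
        intro σ hσ
        have hmul : HasDerivAt (fun σ : ℝ => m * σ) m σ := by
          simpa using (hasDerivAt_id σ).const_mul m
        exact (hφ'd σ hσ).sub hmul
      have humon : MonotoneOn uf (Set.Icc 0 1) := by
        refine monotoneOn_of_deriv_nonneg (convex_Icc 0 1) ?_ ?_ ?_
        · exact fun σ hσ => (hufd σ hσ).continuousAt.continuousWithinAt
        · intro σ hσ
          rw [interior_Icc] at hσ
          exact ((hufd σ ⟨hσ.1.le, hσ.2.le⟩).differentiableAt).differentiableWithinAt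
        · intro σ hσ
          rw [interior_Icc] at hσ
          rw [(hufd σ ⟨hσ.1.le, hσ.2.le⟩).deriv]
          have := hqlow σ ⟨hσ.1.le, hσ.2.le⟩
          linarith
      have h12 := humon (Set.left_mem_Icc.mpr zero_le_one) hθ hθ.1
      simp only [huf, mul_zero, sub_zero] at h12
      linarith
    have hφ'cont : ContinuousOn φ' (Set.Icc (0:ℝ) 1) := by
      refine ContinuousOn.clm_apply ?_ continuousOn_const
      exact hD1cont.comp
        ((continuous_const.add (continuous_id.smul continuous_const)).continuousOn)
        (fun θ hθ => hXU (hlineS θ hθ))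
    have hφ'int : IntervalIntegrable φ' MeasureTheory.volume 0 1 := by
      refine (hφ'cont.mono ?_).intervalIntegrable
      rw [Set.uIcc_of_le zero_le_one]
    have hFTC := intervalIntegral.integral_eq_sub_of_hasDerivAt
      (f := fun θ : ℝ => h (y + θ • d)) (f' := φ')
      (fun θ hθ => hφd θ (by rwa [Set.uIcc_of_le zero_le_one] at hθ)) hφ'int
    have hIlow : φ' 0 + m / 2 ≤ ∫ θ in (0:ℝ)..1, φ' θ := by
      have hci : IntervalIntegrable (fun θ : ℝ => φ' 0 + m * θ)
          MeasureTheory.volume 0 1 :=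
        (continuous_const.add (continuous_const.mul continuous_id)).intervalIntegrable 0 1
      have h1 : (∫ θ in (0:ℝ)..1, (φ' 0 + m * θ)) ≤ ∫ θ in (0:ℝ)..1, φ' θ :=
        intervalIntegral.integral_mono_on zero_le_one hci hφ'int hmono'
      have hmi : IntervalIntegrable (fun θ : ℝ => m * θ) MeasureTheory.volume 0 1 := by
        apply Continuous.intervalIntegrable
        exact continuous_const.mul continuous_id
      have h2 : (∫ θ in (0:ℝ)..1, (φ' 0 + m * θ)) = φ' 0 + m / 2 := by
        rw [intervalIntegral.integral_add intervalIntegrable_const hmi,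
          intervalIntegral.integral_const, intervalIntegral.integral_const_mul, integral_id]
        simp only [smul_eq_mul]
        ring
      linarith
    have e1 : y + (1:ℝ) • d = xstar := by
      rw [one_smul, hd]; abel
    have e0 : y + (0:ℝ) • d = y := by simp
    have e3 : φ' 0 = fderiv ℝ h y (xstar - y) := by
      rw [hφ']
      simp only [zero_smul, add_zero]
      rfl
    have hgy : g y = h xstar - h y - φ' 0 := by
      rw [hgdef, e3]; rfl
    simp only [e1, e0] at hFTC
    rw [hgy]
    have hmm2 : lam / 2 * ‖d‖^2 = m / 2 := by rw [hm]; ring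
    linarith
  have hg0 : g xstar = 0 := by
    rw [hgdef]
    simp [breg]
  constructor
  · exact fun s t hs hst => hmono s t hs hst
  · rw [Metric.tendsto_atTop]
    intro ε hε
    set β := lam / 2 * ε^2 with hβ
    have hβ0 : 0 < β := by positivity
    have hgc : ContinuousAt g xstar := hgcont.continuousAt (hU.mem_nhds (hXU hxstarX))
    obtain ⟨δ₂, hδ₂0, hδ₂⟩ := Metric.continuousAt_iff.mp hgc β hβ0
    have hgnn : ∀ u : ℝ, 0 ≤ u → 0 ≤ g (x u) :=
      fun u hu => le_trans (by positivity) (hglb (x u) (hxX u hu))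
    obtain ⟨T, hT0, hTlt⟩ : ∃ T : ℝ, 0 ≤ T ∧ dist (x T) xstar < δ₂ := by
      by_contra hcon
      push_neg at hcon
      set K := S ∩ {y | δ₂ ≤ dist y xstar} with hK
      have hKcomp : IsCompact K := hScomp.inter_right
        (isClosed_le continuous_const (continuous_id.dist continuous_const))
      have hKne : K.Nonempty := ⟨x 0, hxX 0 le_rfl, hcon 0 le_rfl⟩
      obtain ⟨y0, hy0K, hy0max⟩ := hKcomp.exists_isMaxOn hKne
        (hψcont.mono Set.inter_subset_left)
      have hy0neg : psi y0 < 0 := by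
        have h1 := (hGESS y0 hy0K.1).1
        rcases eq_or_lt_of_le h1 with he | hl
        · exfalso
          have h3 := (hGESS y0 hy0K.1).2 he
          have h2 := hy0K.2
          rw [h3] at h2
          simp only [Set.mem_setOf_eq, dist_self] at h2
          linarith
        · exact hl
      set cc := -psi y0 with hcc
      have hcc0 : 0 < cc := by rw [hcc]; linarith
      have hdec : ∀ t : ℝ, 0 ≤ t → g (x t) ≤ g (x 0) - cc * t := by
        intro t ht
        have h1 := lemA 0 t le_rfl ht
        have h2 : (∫ u in (0:ℝ)..t, psi (x u)) ≤ ∫ u in (0:ℝ)..t, (-cc) := by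
          refine intervalIntegral.integral_mono_on ht ?_ intervalIntegrable_const ?_
          · refine (hpsix.mono ?_).intervalIntegrable
            rw [Set.uIcc_of_le ht]
            exact fun u hu => hu.1
          · intro u hu
            have h5 := isMaxOn_iff.mp hy0max (x u) ⟨hxX u hu.1, hcon u hu.1⟩
            rw [hcc]
            linarith
        rw [intervalIntegral.integral_const] at h2
        simp only [smul_eq_mul, sub_zero] at h2
        have h6 : t * (-cc) = -(cc * t) := by ring
        rw [h6] at h2
        linarith
      set Tbad := (g (x 0) + 1) / cc with hTbad
      have hg00 : 0 ≤ g (x 0) := hgnn 0 le_rfl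
      have hTbad0 : 0 ≤ Tbad := by positivity
      have h7 := hdec Tbad hTbad0
      have h8 : cc * Tbad = g (x 0) + 1 := by
        rw [hTbad]
        field_simp
      have h9 := hgnn Tbad hTbad0
      linarith
    refine ⟨T, fun t ht => ?_⟩
    have ht0 : 0 ≤ t := le_trans hT0 ht
    by_contra hfar
    push_neg at hfar
    have h1 : g (x t) ≤ g (x T) := hmono T t hT0 ht
    have h2 : g (x T) < β := by
      have h3 := hδ₂ hTlt
      rw [Real.dist_eq, hg0, sub_zero] at h3
      exact lt_of_le_of_lt (le_abs_self _) h3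
    have h3 : β ≤ g (x t) := by
      have h4 := hglb (x t) (hxX t ht0)
      have h5 : ε ≤ ‖xstar - x t‖ := by
        rw [norm_sub_rev, ← dist_eq_norm]
        exact hfar
      have h6 : ε^2 ≤ ‖xstar - x t‖^2 := by
        nlinarith [hε.le, norm_nonneg (xstar - x t)]
      calc β = lam / 2 * ε^2 := hβ
        _ ≤ lam / 2 * ‖xstar - x t‖^2 := by nlinarith [hlam0.le]
        _ ≤ g (x t) := h4
    linarith
end
end
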